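/- The function φ : ℝ → ℝ given by φ(ρ) = 6(1 − e^{−ρ})(−2 + ρ + (2 + ρ)e^{−ρ})/ρ⁴ for ρ ≠ 0 and φ(0) = 1 is strictly positive on all of ℝ. -/

import Mathlib

noncomputable def phi (ρ : ℝ) : ℝ :=
  if ρ = 0 then 1
  else 6 * (1 - Real.exp (-ρ)) * (-2 + ρ + (2 + ρ) * Real.exp (-ρ)) / ρ ^ 4

private lemma hasDerivG (x : ℝ) :
    HasDerivAt (fun x : ℝ => -2 + x + (2 + x) * Real.exp (-x))
      (1 - (1 + x) * Real.exp (-x)) x := by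
  have hexp : HasDerivAt (fun x : ℝ => Real.exp (-x)) (-Real.exp (-x)) x := by
    simpa [Function.comp_def] using (Real.hasDerivAt_exp (-x)).comp x (hasDerivAt_neg x)
  have h := (((hasDerivAt_id x).const_add (-2 : ℝ)).add
    (((hasDerivAt_id x).const_add (2 : ℝ)).mul hexp))
  refine h.congr_deriv ?_
  simp only [id]
  ring

private lemma derivG_pos {x : ℝ} (hx : x ≠ 0) : 0 < 1 - (1 + x) * Real.exp (-x) := by
  have h1 : 1 + x < Real.exp x := by have := Real.add_one_lt_exp hx; linarith
  have h2 : Real.exp (-x) * Real.exp x = 1 := by rw [← Real.exp_add]; simp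
  nlinarith [Real.exp_pos (-x), Real.exp_pos x]

private lemma g_mono_Ici :
    StrictMonoOn (fun x : ℝ => -2 + x + (2 + x) * Real.exp (-x)) (Set.Ici 0) := by
  apply strictMonoOn_of_deriv_pos (convex_Ici 0)
  · fun_prop
  · intro x hx
    rw [interior_Ici] at hx
    rw [(hasDerivG x).deriv]
    exact derivG_pos (ne_of_gt hx)

private lemma g_mono_Iic :
    StrictMonoOn (fun x : ℝ => -2 + x + (2 + x) * Real.exp (-x)) (Set.Iic 0) := by
  apply strictMonoOn_of_deriv_pos (convex_Iic 0)
  · fun_prop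
  · intro x hx
    rw [interior_Iic] at hx
    rw [(hasDerivG x).deriv]
    exact derivG_pos (ne_of_lt hx)

theorem stmt_5 (ρ : ℝ) : 0 < phi ρ := by
  unfold phi
  split_ifs with h
  · norm_num
  have hden : (0:ℝ) < ρ ^ 4 := by positivity
  have hg0 : (fun x : ℝ => -2 + x + (2 + x) * Real.exp (-x)) 0 = 0 := by simp
  rcases lt_or_gt_of_ne h with hρ | hρ
  · have h1 : 1 - Real.exp (-ρ) < 0 := by
      have : (1:ℝ) < Real.exp (-ρ) := by
        rw [Real.one_lt_exp_iff]
        linarith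
      linarith
    have h2 : -2 + ρ + (2 + ρ) * Real.exp (-ρ) < 0 := by
      have := g_mono_Iic (Set.mem_Iic.mpr hρ.le) (Set.mem_Iic.mpr le_rfl) hρ
      simpa [hg0] using this
    have hnum : 0 < 6 * (1 - Real.exp (-ρ)) * (-2 + ρ + (2 + ρ) * Real.exp (-ρ)) := by
      nlinarith
    positivity
  · have h1 : 0 < 1 - Real.exp (-ρ) := by
      have : Real.exp (-ρ) < 1 := Real.exp_lt_one_iff.mpr (by linarith)
      linarith
    have h2 : 0 < -2 + ρ + (2 + ρ) * Real.exp (-ρ) := by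
      have := g_mono_Ici (Set.mem_Ici.mpr le_rfl) (Set.mem_Ici.mpr hρ.le) hρ
      simpa [hg0] using this
    have hnum : 0 < 6 * (1 - Real.exp (-ρ)) * (-2 + ρ + (2 + ρ) * Real.exp (-ρ)) := by
      nlinarith
    positivity
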